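/- arXiv:1607.02478 — 2 statements merged into one kernel-verified Lean document; each statement's English description precedes it below -/
import Mathlib

section
/- Let ρ₊ and ρ₋ be qubit density matrices given by ρ± = U±(t) ρ₀ U±(t)† where U±(t) = exp(∓(i/2) g t σ_z) and ρ₀ is a qubit state with eigenvalue λ ∈ [0,1] whose eigenbasis is rotated from the σ_z basis by Euler angle β (i.e., ρ₀ = R [[λ,0],[0,1−λ]] R† with R a rotation by β about the y-axis, up to phases). Then the fidelity satisfies B(ρ₊(t), ρ₋(t)) = √(1 − (2λ−1)² sin²β sin²(g t)). -/
open Matrix Real Complex ComplexOrder Filter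

noncomputable def traceNorm {n : Type*} [Fintype n] [DecidableEq n] (A : Matrix n n ℂ) : ℝ :=
  ∑ i, Real.sqrt ((Matrix.posSemidef_conjTranspose_mul_self A).isHermitian.eigenvalues i)

def IsDensity {n : Type*} [Fintype n] [DecidableEq n] (ρ : Matrix n n ℂ) : Prop :=
  ρ.PosSemidef ∧ ρ.trace = 1

noncomputable def matSqrt {n : Type*} [Fintype n] [DecidableEq n] (A : Matrix n n ℂ) : Matrix n n ℂ :=
  open scoped Classical in
  if h : A.PosSemidef then (h.1.eigenvectorUnitary : Matrix n n ℂ) * diagonal ((↑) ∘ (√·) ∘ h.1.eigenvalues) *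
    (star h.1.eigenvectorUnitary : Matrix n n ℂ) else 0

noncomputable def fidelity {n : Type*} [Fintype n] [DecidableEq n] (ρ σ : Matrix n n ℂ) : ℝ :=
  traceNorm (matSqrt ρ * matSqrt σ)

noncomputable def Rz (x : ℝ) : Matrix (Fin 2) (Fin 2) ℂ :=
  !![Complex.exp (-(x/2 : ℝ) * Complex.I), 0; 0, Complex.exp ((x/2 : ℝ) * Complex.I)]

noncomputable def Ry (x : ℝ) : Matrix (Fin 2) (Fin 2) ℂ :=
  !![(Real.cos (x/2) : ℂ), -(Real.sin (x/2) : ℂ); (Real.sin (x/2) : ℂ), (Real.cos (x/2) : ℂ)]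

noncomputable def eulerRot (α β γ : ℝ) : Matrix (Fin 2) (Fin 2) ℂ := Rz α * Ry β * Rz γ

noncomputable def rho0 (α β γ l : ℝ) : Matrix (Fin 2) (Fin 2) ℂ :=
  eulerRot α β γ * Matrix.diagonal ![(l : ℂ), (1 - l : ℂ)] * (eulerRot α β γ)ᴴ

/-! ### Auxiliary lemmas -/

lemma aux_trace_eq_sum_eigenvalues {n : Type*} [Fintype n] [DecidableEq n]
    {A : Matrix n n ℂ} (hA : A.IsHermitian) :
    A.trace = ∑ i, (hA.eigenvalues i : ℂ) := by
  conv_lhs => rw [hA.spectral_theorem, Unitary.conjStarAlgAut_apply]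
  rw [Matrix.trace_mul_cycle]
  have : (star (hA.eigenvectorUnitary : Matrix n n ℂ)) * (hA.eigenvectorUnitary : Matrix n n ℂ) = 1 :=
    Unitary.coe_star_mul_self _
  rw [this, Matrix.one_mul, Matrix.trace_diagonal]
  rfl

lemma aux_traceNorm_fin_two (A : Matrix (Fin 2) (Fin 2) ℂ) :
    traceNorm A = Real.sqrt ((Aᴴ * A).trace.re + 2 * Real.sqrt ((Aᴴ * A).det.re)) := by
  have hpsd := Matrix.posSemidef_conjTranspose_mul_self A
  set h := hpsd.isHermitian
  set e := h.eigenvalues with he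
  have h0 : 0 ≤ e 0 := hpsd.eigenvalues_nonneg 0
  have h1 : 0 ≤ e 1 := hpsd.eigenvalues_nonneg 1
  have htr : (Aᴴ * A).trace.re = e 0 + e 1 := by
    rw [aux_trace_eq_sum_eigenvalues h, Fin.sum_univ_two]
    simp
    rfl
  have hdet : (Aᴴ * A).det.re = e 0 * e 1 := by
    rw [h.det_eq_prod_eigenvalues, Fin.prod_univ_two]
    simp [← Complex.ofReal_mul]
    rfl
  rw [traceNorm, Fin.sum_univ_two, htr, hdet]
  show Real.sqrt (e 0) + Real.sqrt (e 1) = _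
  rw [Real.sqrt_mul h0, show e 0 + e 1 + 2 * (Real.sqrt (e 0) * Real.sqrt (e 1)) = (Real.sqrt (e 0) + Real.sqrt (e 1))^2 by
      rw [add_sq, Real.sq_sqrt h0, Real.sq_sqrt h1]; ring,
    Real.sqrt_sq (by positivity)]

lemma Rz_mul (x y : ℝ) : Rz x * Rz y = Rz (x + y) := by
  ext i j
  fin_cases i <;> fin_cases j <;>
    simp [Rz, Matrix.mul_apply, Fin.sum_univ_two, ← Complex.exp_add]
  all_goals (congr 1; push_cast; ring)

lemma Rz_conjTranspose (x : ℝ) : (Rz x)ᴴ = Rz (-x) := by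
  ext i j
  fin_cases i <;> fin_cases j <;> simp [Rz]
  all_goals (rw [← Complex.exp_conj]; congr 1; simp [map_div₀, map_ofNat]; try ring)

lemma Rz_zero : Rz 0 = 1 := by
  ext i j
  fin_cases i <;> fin_cases j <;> simp [Rz]

lemma Ry_unitary (x : ℝ) : (Ry x)ᴴ * Ry x = 1 := by
  ext i j
  fin_cases i <;> fin_cases j <;>
    simp [Ry, Matrix.mul_apply, Fin.sum_univ_two, Matrix.conjTranspose_apply,
      Complex.conj_ofReal, Matrix.one_apply, -Complex.ofReal_cos, -Complex.ofReal_sin]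
  all_goals try norm_cast
  all_goals nlinarith [Real.sin_sq_add_cos_sq (x*(1/2)), Real.sin_sq_add_cos_sq (x/2)]

lemma K_explicit (b θ : ℝ) : (Ry b)ᴴ * Rz (2*θ) * Ry b =
    !![(Real.cos θ : ℂ) - (Real.sin θ * Real.cos b : ℂ) * Complex.I,
       (Real.sin b * Real.sin θ : ℂ) * Complex.I;
       (Real.sin b * Real.sin θ : ℂ) * Complex.I,
       (Real.cos θ : ℂ) + (Real.sin θ * Real.cos b : ℂ) * Complex.I] := by
  have hcos : Real.cos b = Real.cos (b/2)^2 - Real.sin (b/2)^2 := by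
    rw [show b = b/2 + b/2 by ring, Real.cos_add]; ring
  have hsin : Real.sin b = 2 * Real.sin (b/2) * Real.cos (b/2) := by
    rw [show b = b/2 + b/2 by ring, Real.sin_add]; ring
  have hpy := Real.sin_sq_add_cos_sq (b/2)
  have Hpy : (Real.sin (b/2) : ℂ)^2 + (Real.cos (b/2) : ℂ)^2 = 1 := by exact_mod_cast hpy
  have Hcos : (Real.cos b : ℂ) = (Real.cos (b/2) : ℂ)^2 - (Real.sin (b/2) : ℂ)^2 := by
    exact_mod_cast hcos
  have Hsin : (Real.sin b : ℂ) = 2 * (Real.sin (b/2) : ℂ) * (Real.cos (b/2) : ℂ) := by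
    exact_mod_cast hsin
  have h2 : Rz (2*θ) = !![(Real.cos θ : ℂ) - (Real.sin θ : ℂ) * Complex.I, 0; 0,
      (Real.cos θ : ℂ) + (Real.sin θ : ℂ) * Complex.I] := by
    ext i j
    fin_cases i <;> fin_cases j <;> simp [Rz]
    · rw [show -((θ:ℂ)*Complex.I) = (-θ:ℝ)*Complex.I by push_cast; ring, Complex.exp_mul_I]
      simp [Complex.cos_neg, Complex.sin_neg]; ring
    · rw [Complex.exp_mul_I]
  rw [h2]
  ext i j
  fin_cases i <;> fin_cases j <;>
    simp [Ry, Matrix.mul_apply, Fin.sum_univ_two, Complex.conj_ofReal,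
      -Complex.ofReal_cos, -Complex.ofReal_sin]
  · linear_combination (Real.cos θ : ℂ) * Hpy + (Real.sin θ : ℂ) * Complex.I * Hcos
  · linear_combination -(Real.sin θ : ℂ) * Complex.I * Hsin
  · linear_combination -(Real.sin θ : ℂ) * Complex.I * Hsin
  · linear_combination (Real.cos θ : ℂ) * Hpy - (Real.sin θ : ℂ) * Complex.I * Hcos

lemma diag_as_mat (a c : ℂ) : Matrix.diagonal ![a, c] = !![a, 0; 0, c] := by
  ext i j; fin_cases i <;> fin_cases j <;> simp [Matrix.diagonal_apply]

lemma trace_DKDKh (b θ l : ℝ) :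
    ((Matrix.diagonal ![(l:ℂ), (1-l:ℂ)]) * ((Ry b)ᴴ * Rz (2*θ) * Ry b) *
      (Matrix.diagonal ![(l:ℂ), (1-l:ℂ)]) * ((Ry b)ᴴ * Rz (2*θ) * Ry b)ᴴ).trace.re
      = 1 - (2*l-1)^2 * Real.sin b ^ 2 * Real.sin θ ^ 2 - 2*l*(1-l) := by
  rw [K_explicit, diag_as_mat]
  simp only [Matrix.trace_fin_two, Matrix.mul_apply, Fin.sum_univ_two,
    Matrix.conjTranspose_apply, Matrix.cons_val', Matrix.cons_val_zero, Matrix.cons_val_one,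
    Matrix.head_cons, Matrix.head_fin_const, Matrix.empty_val', Matrix.cons_val_fin_one,
    Matrix.of_apply, Complex.star_def, map_sub, map_add, _root_.map_mul, Complex.conj_ofReal,
    Complex.conj_I, star_zero, Fin.isValue]
  simp only [Complex.add_re, Complex.sub_re, Complex.mul_re, Complex.mul_im, Complex.add_im,
    Complex.sub_im, Complex.neg_re, Complex.neg_im, Complex.I_re, Complex.I_im,
    Complex.ofReal_re, Complex.ofReal_im, Complex.one_re, Complex.one_im, Complex.zero_re,
    Complex.zero_im, mul_zero, zero_mul, add_zero, zero_add, sub_zero, zero_sub, mul_one,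
    one_mul, neg_zero, neg_neg]
  linear_combination (l^2 + (1-l)^2) * Real.sin_sq_add_cos_sq θ +
    (l^2 + (1-l)^2) * Real.sin θ ^ 2 * Real.sin_sq_add_cos_sq b

open scoped MatrixOrder in
lemma aux_matSqrt_eq {n : Type*} [Fintype n] [DecidableEq n] {A B : Matrix n n ℂ}
    (hA : A.PosSemidef) (hB : B.PosSemidef) (h : B * B = A) : matSqrt A = B := by
  have h1 : matSqrt A = CFC.sqrt A := by
    rw [CFC.sqrt_eq_cfc, cfc_nnreal_eq_real _ A hA.nonneg, hA.1.cfc_eq, matSqrt, dif_pos hA]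
    have hf : (fun x : ℝ => ((NNReal.sqrt x.toNNReal : NNReal) : ℝ)) = Real.sqrt := by
      funext x; rw [Real.sqrt]
    rw [hf, IsHermitian.cfc, Unitary.conjStarAlgAut_apply]
    rfl
  rw [h1]
  exact CFC.sqrt_unique h hB.nonneg

set_option maxHeartbeats 1000000 in
theorem spin_fidelity (α β γ l g t : ℝ) (hl : l ∈ Set.Icc (0:ℝ) 1) :
    fidelity (Rz (g * t) * rho0 α β γ l * (Rz (g * t))ᴴ)
             (Rz (-(g * t)) * rho0 α β γ l * (Rz (-(g * t)))ᴴ)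
      = Real.sqrt (1 - (2*l - 1)^2 * Real.sin β ^ 2 * Real.sin (g * t) ^ 2) := by
  obtain ⟨hl0, hl1⟩ := hl
  set D : Matrix (Fin 2) (Fin 2) ℂ := Matrix.diagonal ![(l : ℂ), (1 - l : ℂ)] with hD
  set S : Matrix (Fin 2) (Fin 2) ℂ :=
    Matrix.diagonal ![(Real.sqrt l : ℂ), (Real.sqrt (1 - l) : ℂ)] with hS
  have hl1' : (0:ℝ) ≤ 1 - l := by linarith
  have hRzc : ∀ x : ℝ, Rz x * (Rz x)ᴴ = 1 := fun x => by
    rw [Rz_conjTranspose, Rz_mul, add_neg_cancel, Rz_zero]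
  have hSS : S * S = D := by
    rw [hS, hD, diag_as_mat, diag_as_mat]
    ext i j
    fin_cases i <;> fin_cases j <;>
      simp [Matrix.mul_apply, Fin.sum_univ_two, ← Complex.ofReal_mul,
        Real.mul_self_sqrt hl0, Real.mul_self_sqrt hl1'] <;>
      push_cast <;> ring
  have hSH : Sᴴ = S := by
    rw [hS]
    ext i j
    fin_cases i <;> fin_cases j <;> simp [Matrix.diagonal_apply, Complex.conj_ofReal]
  have hDpsd : D.PosSemidef := by
    rw [hD]
    refine Matrix.posSemidef_diagonal_iff.mpr fun i => ?_
    fin_cases i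
    · simp only [Matrix.cons_val_zero]
      exact Complex.zero_le_real.mpr hl0
    · simp only [Matrix.cons_val_one, Matrix.head_cons]
      rw [show (1:ℂ) - (l:ℂ) = ((1 - l : ℝ) : ℂ) by push_cast; ring]
      exact Complex.zero_le_real.mpr hl1'
  have hSpsd : S.PosSemidef := by
    rw [hS]
    refine Matrix.posSemidef_diagonal_iff.mpr fun i => ?_
    fin_cases i
    · simp only [Matrix.cons_val_zero]
      exact Complex.zero_le_real.mpr (Real.sqrt_nonneg _)
    · simp only [Matrix.cons_val_one, Matrix.head_cons]
      exact Complex.zero_le_real.mpr (Real.sqrt_nonneg _)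
  set U : Matrix (Fin 2) (Fin 2) ℂ := Rz (g*t) * (Rz α * Ry β) with hU
  set V : Matrix (Fin 2) (Fin 2) ℂ := Rz (-(g*t)) * (Rz α * Ry β) with hV
  have hUU : Uᴴ * U = 1 := by
    rw [hU]
    simp only [Matrix.conjTranspose_mul, Rz_conjTranspose, Matrix.mul_assoc]
    rw [← Matrix.mul_assoc (Rz (-(g*t))) (Rz (g*t)), Rz_mul, neg_add_cancel, Rz_zero,
      Matrix.one_mul, ← Matrix.mul_assoc (Rz (-α)) (Rz α), Rz_mul, neg_add_cancel, Rz_zero,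
      Matrix.one_mul, Ry_unitary]
  have hVV : Vᴴ * V = 1 := by
    rw [hV]
    simp only [Matrix.conjTranspose_mul, Rz_conjTranspose, Matrix.mul_assoc, neg_neg]
    rw [← Matrix.mul_assoc (Rz (g*t)) (Rz (-(g*t))), Rz_mul, add_neg_cancel, Rz_zero,
      Matrix.one_mul, ← Matrix.mul_assoc (Rz (-α)) (Rz α), Rz_mul, neg_add_cancel, Rz_zero,
      Matrix.one_mul, Ry_unitary]
  have hcommD : ∀ x : ℝ, Rz x * D = D * Rz x := by
    intro x
    rw [hD]
    ext i j
    fin_cases i <;> fin_cases j <;>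
      simp [Rz, Matrix.mul_apply, Fin.sum_univ_two, Matrix.diagonal_apply] <;> ring
  have hρ0 : rho0 α β γ l = (Rz α * Ry β) * D * (Rz α * Ry β)ᴴ := by
    rw [rho0, eulerRot, ← hD]
    simp only [Matrix.conjTranspose_mul, Matrix.mul_assoc]
    congr 2
    rw [← Matrix.mul_assoc (Rz γ) D, hcommD γ, Matrix.mul_assoc,
      ← Matrix.mul_assoc (Rz γ) ((Rz γ)ᴴ), hRzc γ, Matrix.one_mul]
  have hplus : Rz (g * t) * rho0 α β γ l * (Rz (g * t))ᴴ = U * D * Uᴴ := by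
    rw [hρ0, hU]
    simp only [Matrix.conjTranspose_mul, Matrix.mul_assoc]
  have hminus : Rz (-(g * t)) * rho0 α β γ l * (Rz (-(g * t)))ᴴ = V * D * Vᴴ := by
    rw [hρ0, hV]
    simp only [Matrix.conjTranspose_mul, Matrix.mul_assoc]
  set X : Matrix (Fin 2) (Fin 2) ℂ := U * S * Uᴴ with hXdef
  set Y : Matrix (Fin 2) (Fin 2) ℂ := V * S * Vᴴ with hYdef
  have hXX : X * X = U * D * Uᴴ := by
    rw [hXdef]
    simp only [Matrix.mul_assoc]
    rw [← Matrix.mul_assoc Uᴴ U, hUU, Matrix.one_mul, ← Matrix.mul_assoc S S, hSS]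
  have hYY : Y * Y = V * D * Vᴴ := by
    rw [hYdef]
    simp only [Matrix.mul_assoc]
    rw [← Matrix.mul_assoc Vᴴ V, hVV, Matrix.one_mul, ← Matrix.mul_assoc S S, hSS]
  have hXpsd : X.PosSemidef := hSpsd.mul_mul_conjTranspose_same U
  have hYpsd : Y.PosSemidef := hSpsd.mul_mul_conjTranspose_same V
  have hUDpsd : (U * D * Uᴴ).PosSemidef := hDpsd.mul_mul_conjTranspose_same U
  have hVDpsd : (V * D * Vᴴ).PosSemidef := hDpsd.mul_mul_conjTranspose_same V
  have hmatSU : matSqrt (U * D * Uᴴ) = X := by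
    exact aux_matSqrt_eq hUDpsd hXpsd hXX
  have hmatSV : matSqrt (V * D * Vᴴ) = Y := by
    exact aux_matSqrt_eq hVDpsd hYpsd hYY
  have hXh : Xᴴ = X := by
    rw [hXdef]
    simp only [Matrix.conjTranspose_mul, Matrix.conjTranspose_conjTranspose, hSH,
      Matrix.mul_assoc]
  have hYh : Yᴴ = Y := by
    rw [hYdef]
    simp only [Matrix.conjTranspose_mul, Matrix.conjTranspose_conjTranspose, hSH,
      Matrix.mul_assoc]
  rw [fidelity, hplus, hminus, hmatSU, hmatSV, aux_traceNorm_fin_two]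
  -- the matrix W = Vᴴ * U
  have hW : Vᴴ * U = (Ry β)ᴴ * Rz (2*(g*t)) * Ry β := by
    rw [hU, hV]
    simp only [Matrix.conjTranspose_mul, Rz_conjTranspose, Matrix.mul_assoc, neg_neg]
    rw [← Matrix.mul_assoc (Rz (g*t)) (Rz (g*t)), Rz_mul,
      ← Matrix.mul_assoc (Rz (-α)) (Rz (g*t + g*t)), Rz_mul,
      ← Matrix.mul_assoc (Rz (-α + (g*t + g*t))) (Rz α), Rz_mul,
      show -α + (g*t + g*t) + α = 2*(g*t) by ring]
  have hWh : Uᴴ * V = ((Ry β)ᴴ * Rz (2*(g*t)) * Ry β)ᴴ := by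
    rw [← hW]
    simp only [Matrix.conjTranspose_mul, Matrix.conjTranspose_conjTranspose]
  -- trace computation
  have htr : ((X * Y)ᴴ * (X * Y)).trace
      = (D * ((Ry β)ᴴ * Rz (2*(g*t)) * Ry β) * D * ((Ry β)ᴴ * Rz (2*(g*t)) * Ry β)ᴴ).trace := by
    rw [Matrix.conjTranspose_mul, hXh, hYh]
    calc (Y * X * (X * Y)).trace = ((X * Y) * (Y * X)).trace := by
          rw [Matrix.trace_mul_comm]
      _ = (X * ((Y * Y) * X)).trace := by simp only [Matrix.mul_assoc]
      _ = ((Y * Y) * (X * X)).trace := by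
          rw [Matrix.trace_mul_comm]
          simp only [Matrix.mul_assoc]
      _ = (V * (D * (Vᴴ * (U * (D * Uᴴ))))).trace := by
          rw [hXX, hYY]
          simp only [Matrix.mul_assoc]
      _ = (D * (Vᴴ * (U * (D * (Uᴴ * V))))).trace := by
          rw [Matrix.trace_mul_comm]
          simp only [Matrix.mul_assoc]
      _ = _ := by
          rw [← Matrix.mul_assoc Vᴴ U, hW, ← hWh, ← hW]
          simp only [Matrix.mul_assoc]
  -- determinant computation
  have hdetU1 : U.det * Uᴴ.det = 1 := by
    have := congrArg Matrix.det hUU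
    rw [Matrix.det_mul, Matrix.det_one] at this
    rw [mul_comm]; exact this
  have hdetV1 : V.det * Vᴴ.det = 1 := by
    have := congrArg Matrix.det hVV
    rw [Matrix.det_mul, Matrix.det_one] at this
    rw [mul_comm]; exact this
  have hdetS : S.det = ((Real.sqrt l * Real.sqrt (1 - l) : ℝ) : ℂ) := by
    rw [hS, Matrix.det_diagonal, Fin.prod_univ_two]
    push_cast
    simp
  have hdetX : X.det = ((Real.sqrt l * Real.sqrt (1 - l) : ℝ) : ℂ) := by
    rw [hXdef, Matrix.det_mul, Matrix.det_mul]
    rw [show U.det * S.det * Uᴴ.det = U.det * Uᴴ.det * S.det by ring, hdetU1, one_mul, hdetS]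
  have hdetY : Y.det = ((Real.sqrt l * Real.sqrt (1 - l) : ℝ) : ℂ) := by
    rw [hYdef, Matrix.det_mul, Matrix.det_mul]
    rw [show V.det * S.det * Vᴴ.det = V.det * Vᴴ.det * S.det by ring, hdetV1, one_mul, hdetS]
  have hdetA : (X * Y).det = ((l * (1 - l) : ℝ) : ℂ) := by
    rw [Matrix.det_mul, hdetX, hdetY, ← Complex.ofReal_mul]
    congr 1
    rw [show Real.sqrt l * Real.sqrt (1-l) * (Real.sqrt l * Real.sqrt (1-l))
        = (Real.sqrt l * Real.sqrt l) * (Real.sqrt (1-l) * Real.sqrt (1-l)) by ring,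
      Real.mul_self_sqrt hl0, Real.mul_self_sqrt hl1']
  have hdet : ((X * Y)ᴴ * (X * Y)).det.re = (l * (1 - l))^2 := by
    rw [Matrix.det_mul, Matrix.det_conjTranspose, hdetA]
    simp [← Complex.ofReal_mul, ← Complex.ofReal_pow, Complex.conj_ofReal]
    ring
  rw [htr, hdet, trace_DKDKh β (g*t) l, Real.sqrt_sq (by nlinarith)]
  congr 1
  ring
end

section
/- For any two finite probability distributions obtained by measuring density matrices ρ and σ with a POVM {Pₓ}, the Kolmogorov distance between the outcome distributions is at most 1 − (1/2) B(ρ,σ)², where B is the fidelity. Consequently, max over POVMs of K(ρ(P), σ(P)) ≤ 1 − (1/2) B(ρ,σ)². -/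
open Matrix Real Complex ComplexOrder Filter

section AuxFvG
set_option linter.unusedSectionVars false
variable {n : Type*} [Fintype n] [DecidableEq n]

lemma matSqrt_posSemidef {A : Matrix n n ℂ} (hA : A.PosSemidef) : (matSqrt A).PosSemidef := by
  rw [matSqrt, dif_pos hA]
  refine (PosSemidef.diagonal ?_).mul_mul_conjTranspose_same _
  intro i
  exact Complex.zero_le_real.mpr (Real.sqrt_nonneg _)

lemma matSqrt_mul_self {A : Matrix n n ℂ} (hA : A.PosSemidef) : matSqrt A * matSqrt A = A := by
  rw [matSqrt, dif_pos hA]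
  set U := (hA.1.eigenvectorUnitary : Matrix n n ℂ) with hU
  have hUU : star U * U = 1 := Matrix.mem_unitaryGroup_iff'.mp hA.1.eigenvectorUnitary.2
  have hD : diagonal (((↑) ∘ (√·) ∘ hA.1.eigenvalues) : n → ℂ) *
      diagonal (((↑) ∘ (√·) ∘ hA.1.eigenvalues) : n → ℂ)
      = diagonal (RCLike.ofReal ∘ hA.1.eigenvalues) := by
    rw [diagonal_mul_diagonal]
    congr 1
    funext i
    simp only [Function.comp]
    rw [← Complex.ofReal_mul, Real.mul_self_sqrt (hA.eigenvalues_nonneg i)]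
    rfl
  conv_rhs => rw [hA.1.spectral_theorem, Unitary.conjStarAlgAut_apply]
  rw [← hD]
  simp only [Matrix.mul_assoc]
  rw [← Matrix.mul_assoc (star U) U, hUU, Matrix.one_mul]

lemma psd_diag_nonneg {A : Matrix n n ℂ} (hA : A.PosSemidef) (i : n) : 0 ≤ (A i i).re := by
  have h := hA.diag_nonneg (i := i)
  rw [Complex.le_def] at h
  simpa using h.1


lemma psd_trace_re_nonneg {A : Matrix n n ℂ} (hA : A.PosSemidef) : 0 ≤ A.trace.re := by
  rw [Matrix.trace, Complex.re_sum]
  exact Finset.sum_nonneg fun i _ => psd_diag_nonneg hA i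

lemma psd_trace_mul_re_nonneg {A B : Matrix n n ℂ} (hA : A.PosSemidef) (hB : B.PosSemidef) :
    0 ≤ ((A * B).trace).re := by
  have key : (matSqrt B * matSqrt A)ᴴ * (matSqrt B * matSqrt A) = matSqrt A * B * matSqrt A := by
    rw [Matrix.conjTranspose_mul, (matSqrt_posSemidef hA).isHermitian.eq,
      (matSqrt_posSemidef hB).isHermitian.eq]
    simp only [Matrix.mul_assoc]
    rw [← Matrix.mul_assoc (matSqrt B), matSqrt_mul_self hB]
  have h1 : (matSqrt A * B * matSqrt A).trace = (A * B).trace := by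
    rw [Matrix.trace_mul_cycle (matSqrt A) B (matSqrt A), matSqrt_mul_self hA]
  have h2 := psd_trace_re_nonneg (Matrix.posSemidef_conjTranspose_mul_self (matSqrt B * matSqrt A))
  rwa [key, h1] at h2

lemma psd_trace_mul_mono {A B C : Matrix n n ℂ} (hA : A.PosSemidef) (hBC : (C - B).PosSemidef) :
    ((A * B).trace).re ≤ ((A * C).trace).re := by
  have h := psd_trace_mul_re_nonneg hA hBC
  rw [Matrix.mul_sub, Matrix.trace_sub, Complex.sub_re] at h
  linarith



lemma entry_re_sq (z : ℂ) : ((starRingEnd ℂ) z * z).re = ‖z‖ ^ 2 := by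
  rw [mul_comm, Complex.mul_conj, Complex.ofReal_re, Complex.sq_norm]

lemma trace_cs (B C : Matrix n n ℂ) :
    ‖(Bᴴ * C).trace‖ ≤ Real.sqrt ((Bᴴ * B).trace.re) * Real.sqrt ((Cᴴ * C).trace.re) := by
  have habs : ∀ D : Matrix n n ℂ, (Dᴴ * D).trace.re = ∑ p : n × n, ‖D p.1 p.2‖ ^ 2 := by
    intro D
    rw [Fintype.sum_prod_type, Matrix.trace, Complex.re_sum, Finset.sum_comm]
    simp only [Matrix.diag, Matrix.mul_apply, Matrix.conjTranspose_apply, Complex.re_sum]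
    exact Finset.sum_congr rfl fun i _ => Finset.sum_congr rfl fun j _ => entry_re_sq _
  have htr : (Bᴴ * C).trace = ∑ p : n × n, (starRingEnd ℂ) (B p.2 p.1) * C p.2 p.1 := by
    rw [Fintype.sum_prod_type, Matrix.trace]
    simp only [Matrix.diag, Matrix.mul_apply, Matrix.conjTranspose_apply]
    rfl
  rw [htr, habs, habs]
  calc ‖∑ p : n × n, (starRingEnd ℂ) (B p.2 p.1) * C p.2 p.1‖
      ≤ ∑ p : n × n, ‖B p.2 p.1‖ * ‖C p.2 p.1‖ := by
        refine (norm_sum_le _ _).trans_eq (Finset.sum_congr rfl fun p _ => ?_)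
        rw [norm_mul, Complex.norm_conj]
    _ = ∑ p : n × n, ‖B p.1 p.2‖ * ‖C p.1 p.2‖ := by
        exact Fintype.sum_equiv (Equiv.prodComm n n) _ _ fun p => rfl
    _ ≤ _ := Real.sum_mul_le_sqrt_mul_sqrt _ _ _



lemma exists_partial_isometry (A : Matrix n n ℂ) :
    ∃ T : Matrix n n ℂ,
      (Tᴴ * A).trace = ((∑ i, Real.sqrt
        ((Matrix.posSemidef_conjTranspose_mul_self A).isHermitian.eigenvalues i) : ℝ) : ℂ)
      ∧ (1 - T * Tᴴ).PosSemidef := by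
  have hM := Matrix.posSemidef_conjTranspose_mul_self A
  set μ := hM.isHermitian.eigenvalues with hμdef
  have hμ0 : ∀ i, 0 ≤ μ i := hM.eigenvalues_nonneg
  set U : Matrix n n ℂ := (hM.isHermitian.eigenvectorUnitary : Matrix n n ℂ) with hUdef
  have hUU : Uᴴ * U = 1 := by
    have h := hM.isHermitian.eigenvectorUnitary.2
    rw [Matrix.mem_unitaryGroup_iff'] at h
    exact h
  have hUU' : U * Uᴴ = 1 := by
    have h := hM.isHermitian.eigenvectorUnitary.2
    rw [Matrix.mem_unitaryGroup_iff] at h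
    exact h
  -- conjugation by U
  set c : (n → ℂ) → Matrix n n ℂ := fun d => U * Matrix.diagonal d * Uᴴ with hc
  have hmid : ∀ X : Matrix n n ℂ, Uᴴ * (U * X) = X := fun X => by
    rw [← Matrix.mul_assoc, hUU, one_mul]
  have hcmul : ∀ d e, c d * c e = c (d * e) := by
    intro d e
    simp only [hc, Matrix.mul_assoc]
    rw [hmid, ← Matrix.mul_assoc (Matrix.diagonal d), Matrix.diagonal_mul_diagonal]
    rfl
  have hctrace : ∀ d, (c d).trace = ∑ i, d i := by
    intro d
    rw [hc]
    rw [Matrix.trace_mul_cycle, hUU, one_mul, Matrix.trace_diagonal]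
  have hcherm : ∀ d : n → ℝ, (c (fun i => (d i : ℂ)))ᴴ = c (fun i => (d i : ℂ)) := by
    intro d
    have hstar : star (fun i => ((d i : ℝ) : ℂ)) = fun i => ((d i : ℝ) : ℂ) :=
      funext fun i => by simp [Complex.conj_ofReal]
    simp only [hc, Matrix.conjTranspose_mul, Matrix.conjTranspose_conjTranspose,
      Matrix.diagonal_conjTranspose, hstar, Matrix.mul_assoc]
  have hspec : Aᴴ * A = c (fun i => (μ i : ℂ)) := by
    have h := hM.isHermitian.spectral_theorem
    rw [Unitary.conjStarAlgAut_apply, Matrix.star_eq_conjTranspose] at h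
    rw [hc]
    exact h
  -- the partial isometry
  set f : n → ℝ := fun i => (Real.sqrt (μ i))⁻¹ with hf
  have r1 : ∀ i, f i * μ i = Real.sqrt (μ i) := by
    intro i
    rcases eq_or_lt_of_le (hμ0 i) with h | h
    · simp [hf, ← h]
    · have hs : Real.sqrt (μ i) ≠ 0 := ne_of_gt (Real.sqrt_pos.mpr h)
      rw [hf, inv_mul_eq_div, div_eq_iff hs]
      exact (Real.mul_self_sqrt (hμ0 i)).symm
  have r2 : ∀ i, f i * (f i * μ i * f i) = f i := by
    intro i
    rcases eq_or_lt_of_le (hμ0 i) with h | h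
    · simp [hf, ← h]
    · have hs : Real.sqrt (μ i) ≠ 0 := ne_of_gt (Real.sqrt_pos.mpr h)
      rw [r1 i]
      simp only [hf]
      rw [mul_inv_cancel₀ hs, mul_one]
  set fc : n → ℂ := fun i => (f i : ℂ) with hfc
  have hfch : (c fc)ᴴ = c fc := hcherm f
  refine ⟨A * c fc, ?_, ?_⟩
  · -- trace identity
    have htA : (A * c fc)ᴴ * A = c (fun i => ((Real.sqrt (μ i) : ℝ) : ℂ)) := by
      rw [Matrix.conjTranspose_mul, hfch, Matrix.mul_assoc, hspec, hcmul]
      have harg : (fc * fun i => ((μ i : ℝ) : ℂ)) = fun i => ((Real.sqrt (μ i) : ℝ) : ℂ) := by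
        funext i
        rw [Pi.mul_apply, ← r1 i]
        push_cast
        rfl
      rw [harg]
    rw [htA, hctrace, Complex.ofReal_sum]
  · -- 1 - T Tᴴ is PSD
    set T : Matrix n n ℂ := A * c fc with hT
    have hTH : Tᴴ = c fc * Aᴴ := by
      rw [hT, Matrix.conjTranspose_mul, hfch]
    have hQ : Tᴴ * T = c (fc * ((fun i => ((μ i : ℝ) : ℂ)) * fc)) := by
      rw [hTH, hT, Matrix.mul_assoc (c fc), ← Matrix.mul_assoc Aᴴ, hspec, hcmul, hcmul]
    have hTQ : T * Tᴴ * T = T := by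
      rw [Matrix.mul_assoc, hQ]
      conv_lhs => rw [hT]
      rw [Matrix.mul_assoc, hcmul]
      have harg : (fc * (fc * ((fun i => ((μ i : ℝ) : ℂ)) * fc))) = fc := by
        funext i
        simp only [Pi.mul_apply]
        have h1 : fc i * (fc i * (((μ i : ℝ) : ℂ) * fc i))
            = ((f i * (f i * μ i * f i) : ℝ) : ℂ) := by push_cast; ring
        rw [h1, r2 i]
      rw [harg]
    have hWW : (T * Tᴴ) * (T * Tᴴ) = T * Tᴴ := by
      rw [← Matrix.mul_assoc, hTQ]
    have hWh : (T * Tᴴ)ᴴ = T * Tᴴ := by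
      rw [Matrix.conjTranspose_mul, Matrix.conjTranspose_conjTranspose]
    have key : (1 - T * Tᴴ)ᴴ * (1 - T * Tᴴ) = 1 - T * Tᴴ := by
      rw [Matrix.conjTranspose_sub, Matrix.conjTranspose_one, hWh]
      simp only [sub_mul, mul_sub, one_mul, mul_one, hWW]
      abel
    have hpsd := Matrix.posSemidef_conjTranspose_mul_self (1 - T * Tᴴ)
    rw [key] at hpsd
    exact hpsd

end AuxFvG

theorem kolmogorov_le_one_sub_half_fidelity_sq {n : Type*} [Fintype n] [DecidableEq n]
    {X : Type*} [Fintype X]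
    (ρ σ : Matrix n n ℂ) (hρ : IsDensity ρ) (hσ : IsDensity σ)
    (P : X → Matrix n n ℂ) (hP : ∀ x, (P x).PosSemidef) (hsum : ∑ x, P x = 1) :
    (1/2) * ∑ x, |((ρ * P x).trace).re - ((σ * P x).trace).re|
      ≤ 1 - fidelity ρ σ ^ 2 / 2 := by
  classical
  obtain ⟨hρpsd, hρtr⟩ := hρ
  obtain ⟨hσpsd, hσtr⟩ := hσ
  set r := matSqrt ρ with hr
  set s := matSqrt σ with hs
  have hrH : rᴴ = r := (matSqrt_posSemidef hρpsd).isHermitian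
  have hsH : sᴴ = s := (matSqrt_posSemidef hσpsd).isHermitian
  have hrr : r * r = ρ := matSqrt_mul_self hρpsd
  have hss : s * s = σ := matSqrt_mul_self hσpsd
  set A := r * s with hA
  have hfid : fidelity ρ σ = traceNorm A := by
    rw [fidelity]
  obtain ⟨T, hTtr, hTpsd⟩ := exists_partial_isometry A
  have hTtr' : (Tᴴ * A).trace = ((traceNorm A : ℝ) : ℂ) := hTtr
  have hFnonneg : 0 ≤ traceNorm A := by
    have h : traceNorm A = ∑ i, Real.sqrt
        ((Matrix.posSemidef_conjTranspose_mul_self A).isHermitian.eigenvalues i) := rfl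
    rw [h]
    exact Finset.sum_nonneg fun i _ => Real.sqrt_nonneg _
  set w : X → Matrix n n ℂ := fun x => matSqrt (P x) with hw
  have hwH : ∀ x, (w x)ᴴ = w x := fun x => (matSqrt_posSemidef (hP x)).isHermitian
  have hww : ∀ x, w x * w x = P x := fun x => matSqrt_mul_self (hP x)
  set p : X → ℝ := fun x => ((ρ * P x).trace).re with hp
  set q : X → ℝ := fun x => ((σ * P x).trace).re with hq
  have hp0 : ∀ x, 0 ≤ p x := fun x => psd_trace_mul_re_nonneg hρpsd (hP x)
  have hq0 : ∀ x, 0 ≤ q x := fun x => psd_trace_mul_re_nonneg hσpsd (hP x)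
  have hpsum : ∑ x, p x = 1 := by
    simp only [hp]
    rw [← Complex.re_sum, ← Matrix.trace_sum, ← Finset.mul_sum, hsum, mul_one, hρtr,
      Complex.one_re]
  have hqsum : ∑ x, q x = 1 := by
    simp only [hq]
    rw [← Complex.re_sum, ← Matrix.trace_sum, ← Finset.mul_sum, hsum, mul_one, hσtr,
      Complex.one_re]
  -- per-outcome Cauchy–Schwarz
  have key : ∀ x, ‖(Tᴴ * (r * (P x * s))).trace‖
      ≤ Real.sqrt (p x) * Real.sqrt (q x) := by
    intro x
    have e1 : (w x * r * T)ᴴ * (w x * s) = Tᴴ * (r * (P x * s)) := by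
      simp only [Matrix.conjTranspose_mul, hrH, hwH, Matrix.mul_assoc]
      rw [← Matrix.mul_assoc (w x) (w x) s, hww x]
    have e2 : (w x * r * T)ᴴ * (w x * r * T) = Tᴴ * ((r * (P x * r)) * T) := by
      simp only [Matrix.conjTranspose_mul, hrH, hwH, Matrix.mul_assoc]
      rw [← Matrix.mul_assoc (w x) (w x) (r * T), hww x]
    have e3 : (w x * s)ᴴ * (w x * s) = s * (P x * s) := by
      simp only [Matrix.conjTranspose_mul, hsH, hwH, Matrix.mul_assoc]
      rw [← Matrix.mul_assoc (w x) (w x) s, hww x]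
    have hD : (r * (P x * r)).PosSemidef := by
      have e4 : (w x * r)ᴴ * (w x * r) = r * (P x * r) := by
        simp only [Matrix.conjTranspose_mul, hrH, hwH, Matrix.mul_assoc]
        rw [← Matrix.mul_assoc (w x) (w x) r, hww x]
      have h := Matrix.posSemidef_conjTranspose_mul_self (w x * r)
      rwa [e4] at h
    have htrD : ((r * (P x * r)).trace).re = p x := by
      rw [Matrix.trace_mul_comm, Matrix.mul_assoc, hrr, Matrix.trace_mul_comm, hp]
    have ha_le : ((Tᴴ * ((r * (P x * r)) * T)).trace).re ≤ p x := by
      have hcyc : (Tᴴ * ((r * (P x * r)) * T)).trace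
          = ((r * (P x * r)) * (T * Tᴴ)).trace := by
        rw [← Matrix.mul_assoc, Matrix.trace_mul_cycle, Matrix.trace_mul_comm,
          Matrix.mul_assoc]
      rw [hcyc]
      have h := psd_trace_mul_mono hD hTpsd
      rw [mul_one] at h
      calc ((r * (P x * r)) * (T * Tᴴ)).trace.re ≤ ((r * (P x * r)).trace).re := h
        _ = p x := htrD
    have ha0 : 0 ≤ ((Tᴴ * ((r * (P x * r)) * T)).trace).re := by
      rw [← e2]
      exact psd_trace_re_nonneg (Matrix.posSemidef_conjTranspose_mul_self _)
    have hq_eq : ((s * (P x * s)).trace).re = q x := by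
      rw [Matrix.trace_mul_comm, Matrix.mul_assoc, hss, Matrix.trace_mul_comm, hq]
    calc ‖(Tᴴ * (r * (P x * s))).trace‖
        = ‖((w x * r * T)ᴴ * (w x * s)).trace‖ := by rw [e1]
      _ ≤ Real.sqrt (((w x * r * T)ᴴ * (w x * r * T)).trace.re)
          * Real.sqrt (((w x * s)ᴴ * (w x * s)).trace.re) := trace_cs _ _
      _ ≤ Real.sqrt (p x) * Real.sqrt (q x) := by
          rw [e2, e3, hq_eq]
          exact mul_le_mul_of_nonneg_right (Real.sqrt_le_sqrt ha_le) (Real.sqrt_nonneg _)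
  -- decompose the trace over the POVM
  have hdecomp : Tᴴ * A = ∑ x, Tᴴ * (r * (P x * s)) := by
    have h1 : A = ∑ x, r * (P x * s) := by
      calc A = r * ((∑ x, P x) * s) := by rw [hsum, one_mul, hA]
        _ = ∑ x, r * (P x * s) := by rw [Finset.sum_mul, Finset.mul_sum]
    rw [h1, Finset.mul_sum]
  have hF : traceNorm A ≤ ∑ x, Real.sqrt (p x) * Real.sqrt (q x) := by
    have habs : ‖(Tᴴ * A).trace‖ = traceNorm A := by
      rw [hTtr', Complex.norm_real, Real.norm_eq_abs, _root_.abs_of_nonneg hFnonneg]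
    calc traceNorm A = ‖(Tᴴ * A).trace‖ := habs.symm
      _ = ‖∑ x, (Tᴴ * (r * (P x * s))).trace‖ := by
          rw [hdecomp, Matrix.trace_sum]
      _ ≤ ∑ x, ‖(Tᴴ * (r * (P x * s))).trace‖ := norm_sum_le _ _
      _ ≤ ∑ x, Real.sqrt (p x) * Real.sqrt (q x) :=
          Finset.sum_le_sum fun x _ => key x
  -- classical endgame
  set m := ∑ x, min (p x) (q x) with hm
  have hS0 : 0 ≤ ∑ x, Real.sqrt (p x) * Real.sqrt (q x) :=
    Finset.sum_nonneg fun x _ => mul_nonneg (Real.sqrt_nonneg _) (Real.sqrt_nonneg _)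
  have hcs2 : (∑ x, Real.sqrt (p x) * Real.sqrt (q x)) ^ 2
      ≤ m * (∑ x, max (p x) (q x)) := by
    refine Finset.sum_sq_le_sum_mul_sum_of_sq_eq_mul Finset.univ
      (fun x _ => le_min (hp0 x) (hq0 x))
      (fun x _ => (hp0 x).trans (le_max_left _ _)) (fun x _ => ?_)
    rw [mul_pow, Real.sq_sqrt (hp0 x), Real.sq_sqrt (hq0 x), min_mul_max]
  have hminmax : ∑ x, max (p x) (q x) = 2 - m := by
    have h1 : ∑ x, (min (p x) (q x) + max (p x) (q x)) = ∑ x, (p x + q x) :=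
      Finset.sum_congr rfl fun x _ => min_add_max _ _
    rw [Finset.sum_add_distrib, Finset.sum_add_distrib, hpsum, hqsum] at h1
    rw [← hm] at h1
    linarith
  have habs_eq : ∀ x, |p x - q x| = p x + q x - 2 * min (p x) (q x) := by
    intro x
    have h1 := max_sub_min_eq_abs (p x) (q x)
    have h2 := min_add_max (p x) (q x)
    have h3 := abs_sub_comm (p x) (q x)
    linarith
  have hsum_eq : ∑ x, |p x - q x| = 2 - 2 * m := by
    calc ∑ x, |p x - q x| = ∑ x, (p x + q x - 2 * min (p x) (q x)) :=
        Finset.sum_congr rfl fun x _ => habs_eq x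
      _ = 2 - 2 * m := by
        rw [Finset.sum_sub_distrib, Finset.sum_add_distrib, hpsum, hqsum, ← Finset.mul_sum, ← hm]
        ring
  have hgoal : (∑ x, |((ρ * P x).trace).re - ((σ * P x).trace).re|) = ∑ x, |p x - q x| := rfl
  rw [hgoal, hsum_eq, hfid]
  have hF2 : traceNorm A ^ 2 ≤ m * (2 - m) := by
    calc traceNorm A ^ 2 ≤ (∑ x, Real.sqrt (p x) * Real.sqrt (q x)) ^ 2 :=
        pow_le_pow_left₀ hFnonneg hF 2
      _ ≤ m * (2 - m) := by rw [← hminmax]; exact hcs2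
  nlinarith [sq_nonneg m]
end
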